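/- Let M be a real n×n matrix all of whose complex eigenvalues have modulus strictly greater than 1, and let g(v) = M·v + b be an affine map with fixed point p. If v ≠ p, then the sequence of iterates gᵏ(v) is unbounded. -/

import Mathlib

open Filter
open scoped ENNReal NNReal Topology

attribute [local instance] Matrix.linftyOpNormedRing Matrix.linftyOpNormedAlgebra
  Matrix.linftyOpNormedAddCommGroup Matrix.linftyOpNormedSpace

/-- If all complex eigenvalues of a real `n×n` matrix `M` have modulus strictly
greater than `1`, and `g(v) = M·v + b` is an affine map with fixed point `p`, then for any
`v ≠ p` the sequence of iterates `gᵏ(v)` is unbounded. -/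
theorem expanding_affine_unbounded_orbit (n : ℕ) (M : Matrix (Fin n) (Fin n) ℝ)
    (hM : ∀ z : ℂ, (M.map (Complex.ofReal ·)).charpoly.IsRoot z → 1 < ‖z‖)
    (b : Fin n → ℝ) (g : (Fin n → ℝ) → (Fin n → ℝ))
    (hg : ∀ v, g v = M.mulVec v + b)
    (p : Fin n → ℝ) (hp : g p = p)
    (v : Fin n → ℝ) (hv : v ≠ p) :
    ¬ Bornology.IsBounded (Set.range fun k : ℕ => g^[k] v) := by
  intro hbdd
  rcases Nat.eq_zero_or_pos n with hn | hn
  · subst hn; exact hv (funext fun i => i.elim0)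
  haveI : Nonempty (Fin n) := Fin.pos_iff_nonempty.mp hn
  set w := v - p with hwdef
  have hwne : w ≠ 0 := sub_ne_zero.mpr hv
  have hpfix : M.mulVec p + b = p := by rw [← hg]; exact hp
  have horbit : ∀ k : ℕ, g^[k] v = (M ^ k).mulVec w + p := by
    intro k; induction k with
    | zero => simp [hwdef, Matrix.one_mulVec]
    | succ k ih =>
      rw [Function.iterate_succ_apply', ih, hg, Matrix.mulVec_add,
        Matrix.mulVec_mulVec, add_assoc, hpfix, ← pow_succ']
  obtain ⟨C, hC⟩ := isBounded_iff_forall_norm_le.mp hbdd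
  have hMk : ∀ k : ℕ, ‖(M ^ k).mulVec w‖ ≤ C + ‖p‖ := by
    intro k
    have h1 : ‖(M ^ k).mulVec w + p‖ ≤ C := by
      rw [← horbit k]; exact hC _ ⟨k, rfl⟩
    calc ‖(M ^ k).mulVec w‖ = ‖((M ^ k).mulVec w + p) - p‖ := by ring_nf
      _ ≤ ‖(M ^ k).mulVec w + p‖ + ‖p‖ := norm_sub_le _ _
      _ ≤ C + ‖p‖ := by linarith
  set A : Matrix (Fin n) (Fin n) ℂ := M.map (Complex.ofReal ·) with hA
  have hAmap : A = Complex.ofRealHom.mapMatrix M := rfl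
  set wc : Fin n → ℂ := fun i => ((w i : ℝ) : ℂ) with hwc
  have hwcne : wc ≠ 0 := by
    intro h
    apply hwne
    funext i
    have h2 : ((w i : ℝ) : ℂ) = 0 := congrFun h i
    have h3 : w i = 0 := by exact_mod_cast h2
    simpa using h3
  have hAk : ∀ k : ℕ, (A ^ k).mulVec wc = fun i => (((M ^ k).mulVec w i : ℝ) : ℂ) := by
    intro k
    funext i
    have : A ^ k = (M ^ k).map (Complex.ofReal ·) := by
      rw [hAmap, ← map_pow]; rfl
    rw [this]
    exact (RingHom.map_mulVec Complex.ofRealHom (M ^ k) w i).symm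
  have hnorm : ∀ u : Fin n → ℝ, ‖(fun i => ((u i : ℝ) : ℂ))‖ = ‖u‖ := by
    intro u
    simp [Pi.norm_def, Pi.nnnorm_def, Complex.nnnorm_real]
  have hAkb : ∀ k : ℕ, ‖(A ^ k).mulVec wc‖ ≤ C + ‖p‖ := by
    intro k; rw [hAk k, hnorm]; exact hMk k
  haveI : Nontrivial (Matrix (Fin n) (Fin n) ℂ) :=
    inferInstanceAs (Nontrivial (Fin n → Fin n → ℂ))
  -- spectrum of A consists of charpoly roots
  have hspec : ∀ z ∈ spectrum ℂ A, 1 < ‖z‖ := by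
    intro z hz
    apply hM
    have h1 : Polynomial.eval z (minpoly ℂ A) ∈ spectrum ℂ (Polynomial.aeval A (minpoly ℂ A)) :=
      spectrum.subset_polynomial_aeval A (minpoly ℂ A) ⟨z, hz, rfl⟩
    rw [minpoly.aeval ℂ A, spectrum.zero_eq (𝕜 := ℂ)] at h1
    have hroot : (minpoly ℂ A).IsRoot z := h1
    exact hroot.dvd (Matrix.minpoly_dvd_charpoly A)
  -- A is invertible
  have hunit : IsUnit A := by
    apply spectrum.isUnit_of_zero_notMem (R := ℂ)
    intro h0
    have h1 := hspec 0 h0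
    rw [norm_zero] at h1
    linarith
  obtain ⟨u, hu⟩ := hunit
  set a : Matrix (Fin n) (Fin n) ℂ := ↑u⁻¹ with ha
  -- spectral radius of a is < 1
  haveI : CompleteSpace (Matrix (Fin n) (Fin n) ℂ) := FiniteDimensional.complete ℂ _
  have hnonempty : (spectrum ℂ a).Nonempty :=
    spectrum.nonempty_of_isAlgClosed_of_finiteDimensional ℂ a
  have hsr : spectralRadius ℂ a < 1 := by
    have h := spectrum.spectralRadius_lt_of_forall_lt_of_nonempty hnonempty (r := 1) ?_
    · simpa using h
    · intro k hk
      have hk0 : k ≠ 0 := by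
        rintro rfl
        exact ((spectrum.zero_mem_iff (R := ℂ)).mp hk) (u⁻¹).isUnit
      have hkinv : (k⁻¹ : ℂ) ∈ spectrum ℂ (↑u : Matrix (Fin n) (Fin n) ℂ) := by
        have := (spectrum.inv_mem_iff (r := Units.mk0 k hk0) (a := u⁻¹)).mp hk
        simpa using this
      have h1 := hspec _ (hu ▸ hkinv)
      rw [norm_inv] at h1
      have habs : ‖k‖ < 1 := by
        by_contra hcon
        push_neg at hcon
        have : ‖k‖⁻¹ ≤ 1 := by
          rw [inv_le_one_iff₀]; right; exact hcon
        linarith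
      have : ‖k‖ < 1 := habs
      exact_mod_cast this
  -- norms of powers of a tend to zero
  have h0 : Tendsto (fun k : ℕ => ‖a ^ k‖) atTop (nhds 0) := by
    obtain ⟨r, hr1, hr2⟩ := ENNReal.lt_iff_exists_nnreal_btwn.mp hsr
    have hgel := spectrum.pow_nnnorm_pow_one_div_tendsto_nhds_spectralRadius a
    have hev : ∀ᶠ k : ℕ in atTop, (‖a ^ k‖₊ : ℝ≥0∞) ^ (1 / (k : ℝ)) < r :=
      hgel.eventually_lt_const hr1
    have hr2' : (r : ℝ) < 1 := by exact_mod_cast hr2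
    refine squeeze_zero' (Eventually.of_forall fun k => norm_nonneg _) ?_
      (tendsto_pow_atTop_nhds_zero_of_lt_one r.coe_nonneg hr2')
    filter_upwards [hev, eventually_ge_atTop 1] with k hk hk1
    have hkne : (k : ℝ) ≠ 0 := by positivity
    have h2 : ((‖a ^ k‖₊ : ℝ≥0∞) ^ (1 / (k : ℝ))) ^ (k : ℝ) < (r : ℝ≥0∞) ^ (k : ℝ) :=
      ENNReal.rpow_lt_rpow hk (by positivity)
    rw [← ENNReal.rpow_mul, one_div, inv_mul_cancel₀ hkne, ENNReal.rpow_one,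
      ENNReal.rpow_natCast] at h2
    have h3 : ‖a ^ k‖₊ < r ^ k := by exact_mod_cast h2
    exact_mod_cast h3.le
  -- final contradiction
  have hfin : ∀ k : ℕ, ‖wc‖ ≤ ‖a ^ k‖ * (C + ‖p‖) := by
    intro k
    have hone : a ^ k * A ^ k = 1 := by
      rw [ha, ← hu, ← Units.val_pow_eq_pow_val, ← Units.val_pow_eq_pow_val, ← Units.val_mul,
        inv_pow, inv_mul_cancel, Units.val_one]
    have hid : (a ^ k).mulVec ((A ^ k).mulVec wc) = wc := by
      rw [Matrix.mulVec_mulVec, hone, Matrix.one_mulVec]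
    calc ‖wc‖ = ‖(a ^ k).mulVec ((A ^ k).mulVec wc)‖ := by rw [hid]
      _ ≤ ‖a ^ k‖ * ‖(A ^ k).mulVec wc‖ := Matrix.linfty_opNorm_mulVec _ _
      _ ≤ ‖a ^ k‖ * (C + ‖p‖) := mul_le_mul_of_nonneg_left (hAkb k) (norm_nonneg _)
  have hlim : Tendsto (fun k : ℕ => ‖a ^ k‖ * (C + ‖p‖)) atTop (nhds 0) := by
    simpa using h0.mul_const (C + ‖p‖)
  have hev := hlim.eventually_lt_const (norm_pos_iff.mpr hwcne)
  obtain ⟨k, hk⟩ := hev.exists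
  exact absurd (hfin k) (not_le.mpr hk)
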